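/- Let C be a presheaf category, and let C' be an object admitting an exact presentation A ⇉ B ↠ C' where A and B are subobjects-of-products-of-representables covered by representables (assemblies). Then the diagonal Δ : C' → C' × C' is a compact map: for every compact K and map K → C' × C', the pullback K ×_{C'×C'} C' is compact. -/

import Mathlib

open CategoryTheory Limits

universe u

variable {P : Type u} [SmallCategory P]

/-- A compact presheaf: one admitting an epimorphism from a representable. -/
def IsCompactPsh (K : Pᵒᵖ ⥤ Type u) : Prop :=
  ∃ (c : P) (p : yoneda.obj c ⟶ K), Epi p

/-- An assembly: a presheaf with a monomorphism into a representable and an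
epimorphism from a representable. -/
def IsAssembly (A : Pᵒᵖ ⥤ Type u) : Prop :=
  (∃ (c : P) (m : A ⟶ yoneda.obj c), Mono m) ∧ IsCompactPsh A

/-! ### Auxiliary lemmas -/

/-- In `Type u`, the second projection of a pullback along a surjection is surjective. -/
lemma types_pullback_snd_surjective {X Y Z : Type u} (f : X ⟶ Z) (g : Y ⟶ Z)
    (hf : Function.Surjective f) : Function.Surjective (pullback.snd f g) := by
  intro y
  obtain ⟨x, hx⟩ := hf (g y)
  exact ⟨(Types.pullbackIsoPullback f g).inv ⟨(x, y), hx⟩,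
    Types.pullbackIsoPullback_inv_snd_apply f g ⟨(x, y), hx⟩⟩

/-- In presheaves, the pullback of an epi is an epi (second projection version). -/
lemma psh_epi_pullback_snd {X Y Z : Pᵒᵖ ⥤ Type u} (f : X ⟶ Z) (g : Y ⟶ Z) [Epi f] :
    Epi (pullback.snd f g) := by
  have : ∀ W, Epi ((pullback.snd f g).app W) := by
    intro W
    rw [epi_iff_surjective]
    set G := (evaluation Pᵒᵖ (Type u)).obj W with hG
    have hf : Function.Surjective (G.map f) := by
      rw [← epi_iff_surjective]
      exact inferInstanceAs (Epi (f.app W))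
    have hs : Function.Surjective (pullback.snd (G.map f) (G.map g)) :=
      types_pullback_snd_surjective _ _ hf
    intro y
    obtain ⟨z, hz⟩ := hs y
    refine ⟨(PreservesPullback.iso G f g).inv z, ?_⟩
    have h1 := ConcreteCategory.congr_hom (PreservesPullback.iso_inv_snd G f g) z
    exact h1.trans hz
  exact NatTrans.epi_of_epi_app _

/-- Precomposing the left leg of a pullback with an epi yields an epi onto the pullback. -/
lemma exists_epi_pb_left {X X' Y Z : Pᵒᵖ ⥤ Type u} (p : X' ⟶ X) [Epi p] (f : X ⟶ Z) (g : Y ⟶ Z) :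
    ∃ h : pullback (p ≫ f) g ⟶ pullback f g, Epi h := by
  haveI := psh_epi_pullback_snd p (pullback.fst f g)
  refine ⟨(pullbackRightPullbackFstIso f g p).inv ≫ pullback.snd p (pullback.fst f g), ?_⟩
  exact epi_comp _ _

/-- Precomposing the right leg of a pullback with an epi yields an epi onto the pullback. -/
lemma exists_epi_pb_right {X Y Y' Z : Pᵒᵖ ⥤ Type u} (p : Y' ⟶ Y) [Epi p] (f : X ⟶ Z) (g : Y ⟶ Z) :
    ∃ h : pullback f (p ≫ g) ⟶ pullback f g, Epi h := by
  obtain ⟨h, hh⟩ := exists_epi_pb_left p g f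
  haveI := hh
  refine ⟨(pullbackSymmetry f (p ≫ g)).hom ≫ h ≫ (pullbackSymmetry g f).hom, ?_⟩
  exact epi_comp _ _

/-- Representable presheaves are projective: maps out of them lift along epis. -/
lemma yoneda_proj_lift {B C' : Pᵒᵖ ⥤ Type u} (q : B ⟶ C') [Epi q] {c : P}
    (f : yoneda.obj c ⟶ C') : ∃ f' : yoneda.obj c ⟶ B, f' ≫ q = f := by
  have hs : Function.Surjective (q.app (Opposite.op c)) := by
    rw [← epi_iff_surjective]; infer_instance
  obtain ⟨b, hb⟩ := hs (yonedaEquiv f)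
  refine ⟨yonedaEquiv.symm b, ?_⟩
  apply yonedaEquiv.injective
  rw [yonedaEquiv_comp, Equiv.apply_symm_apply, hb]

lemma compact_of_epi {X Y : Pᵒᵖ ⥤ Type u} (h : IsCompactPsh X) (e : X ⟶ Y) [Epi e] :
    IsCompactPsh Y := by
  obtain ⟨c, p, hp⟩ := h
  haveI := hp
  exact ⟨c, p ≫ e, epi_comp _ _⟩

/-- if `C'` has an exact presentation `A ⇉ B ↠ C'` by
assemblies, then the diagonal `Δ : C' ⟶ C' ⨯ C'` is a compact map: its
pullback along any map from a compact object is compact. -/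
theorem stmt14 [HasFiniteLimits P] {A B C' : Pᵒᵖ ⥤ Type u}
    (a₁ a₂ : A ⟶ B) (q : B ⟶ C') (_ : RegularEpi q) (hker : IsKernelPair q a₁ a₂)
    (hA : IsAssembly A) (hB : IsAssembly B) :
    ∀ (K : Pᵒᵖ ⥤ Type u), IsCompactPsh K → ∀ (k : K ⟶ C' ⨯ C'),
      IsCompactPsh (pullback k (prod.lift (𝟙 C') (𝟙 C'))) := by
  intro K hK k
  haveI : Epi q := RegularEpi.epi q ‹RegularEpi q›
  obtain ⟨c, p, hp⟩ := hK
  haveI := hp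
  obtain ⟨⟨b₀, n, hn⟩, -⟩ := hB
  haveI := hn
  obtain ⟨-, e, r, hr⟩ := hA
  haveI := hr
  set Δ : C' ⟶ C' ⨯ C' := prod.lift (𝟙 C') (𝟙 C') with hΔ
  -- Step 1: reduce to the case of a representable domain.
  set k' : yoneda.obj c ⟶ C' ⨯ C' := p ≫ k with hk'
  obtain ⟨h₁, hh₁⟩ : ∃ h : pullback k' Δ ⟶ pullback k Δ, Epi h := by
    obtain ⟨h₀, hh₀⟩ := exists_epi_pb_left p k Δ
    haveI := hh₀
    exact ⟨(pullback.congrHom hk' rfl).hom ≫ h₀, epi_comp _ _⟩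
  haveI := hh₁
  suffices h : IsCompactPsh (pullback k' Δ) by
    exact compact_of_epi h h₁
  -- the two components of k'
  set f : yoneda.obj c ⟶ C' := k' ≫ prod.fst with hf
  set g : yoneda.obj c ⟶ C' := k' ≫ prod.snd with hg
  -- lift them along the regular epi q
  obtain ⟨f', hf'⟩ := yoneda_proj_lift q f
  obtain ⟨g', hg'⟩ := yoneda_proj_lift q g
  -- basic facts about E := pullback k' Δ
  have hsndf : pullback.fst k' Δ ≫ f = pullback.snd k' Δ := by
    rw [hf, ← Category.assoc, pullback.condition, Category.assoc, hΔ, prod.lift_fst,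
      Category.comp_id]
  have hsndg : pullback.fst k' Δ ≫ g = pullback.snd k' Δ := by
    rw [hg, ← Category.assoc, pullback.condition, Category.assoc, hΔ, prod.lift_snd,
      Category.comp_id]
  have hfg : pullback.fst k' Δ ≫ f = pullback.fst k' Δ ≫ g := hsndf.trans hsndg.symm
  -- the canonical map τ : E ⟶ A induced by the kernel pair property
  have hw : (pullback.fst k' Δ ≫ f') ≫ q = (pullback.fst k' Δ ≫ g') ≫ q := by
    rw [Category.assoc, Category.assoc, hf', hg']
    exact hfg
  set τ : pullback k' Δ ⟶ A := hker.lift (pullback.fst k' Δ ≫ f') (pullback.fst k' Δ ≫ g') hw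
    with hτ
  have hτ₁ : τ ≫ a₁ = pullback.fst k' Δ ≫ f' := hker.lift_fst _ _ _
  have hτ₂ : τ ≫ a₂ = pullback.fst k' Δ ≫ g' := hker.lift_snd _ _ _
  -- the comparison pullback over yoneda.obj b₀ ⨯ yoneda.obj b₀
  set u : yoneda.obj c ⟶ yoneda.obj b₀ ⨯ yoneda.obj b₀ := prod.lift (f' ≫ n) (g' ≫ n) with hu
  set v : A ⟶ yoneda.obj b₀ ⨯ yoneda.obj b₀ := prod.lift (a₁ ≫ n) (a₂ ≫ n) with hv
  -- α : E ⟶ pullback u v and β : pullback u v ⟶ E with α ≫ β = 𝟙, so β is (split) epi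
  have hwα : pullback.fst k' Δ ≫ u = τ ≫ v := by
    apply Limits.prod.hom_ext
    · rw [hu, hv, Category.assoc, Category.assoc, prod.lift_fst, prod.lift_fst,
        ← Category.assoc, ← Category.assoc, hτ₁]
    · rw [hu, hv, Category.assoc, Category.assoc, prod.lift_snd, prod.lift_snd,
        ← Category.assoc, ← Category.assoc, hτ₂]
  set α : pullback k' Δ ⟶ pullback u v := pullback.lift (pullback.fst k' Δ) τ hwα with hα
  -- the condition of pullback u v, componentwise
  have hc₁ : pullback.fst u v ≫ f' = pullback.snd u v ≫ a₁ := by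
    have h := pullback.condition (f := u) (g := v)
    have h1 := congrArg (fun t => t ≫ prod.fst) h
    simp only [Category.assoc, hu, hv, prod.lift_fst] at h1
    rw [← Category.assoc, ← Category.assoc] at h1
    exact (cancel_mono n).1 h1
  have hc₂ : pullback.fst u v ≫ g' = pullback.snd u v ≫ a₂ := by
    have h := pullback.condition (f := u) (g := v)
    have h1 := congrArg (fun t => t ≫ prod.snd) h
    simp only [Category.assoc, hu, hv, prod.lift_snd] at h1
    rw [← Category.assoc, ← Category.assoc] at h1
    exact (cancel_mono n).1 h1
  have hwβ : pullback.fst u v ≫ k' = (pullback.fst u v ≫ f' ≫ q) ≫ Δ := by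
    apply Limits.prod.hom_ext
    · simp only [hΔ, Category.assoc, prod.lift_fst, Category.comp_id]
      rw [hf', hf]
    · simp only [hΔ, Category.assoc, prod.lift_snd, Category.comp_id]
      rw [← hg, ← hg', ← Category.assoc, ← Category.assoc, hc₁, hc₂, Category.assoc,
        Category.assoc, hker.w]
  set β : pullback u v ⟶ pullback k' Δ :=
    pullback.lift (pullback.fst u v) (pullback.fst u v ≫ f' ≫ q) hwβ with hβ
  have hαβ : α ≫ β = 𝟙 (pullback k' Δ) := by
    apply pullback.hom_ext
    · rw [Category.assoc, hβ, pullback.lift_fst, hα, pullback.lift_fst, Category.id_comp]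
    · rw [Category.assoc, hβ, pullback.lift_snd, hα, pullback.lift_fst_assoc,
        Category.id_comp, hf']
      exact hsndf
  haveI hβepi : Epi β := epi_of_epi_fac hαβ
  -- Step 3: cover pullback u v by pullback u (r ≫ v)
  obtain ⟨h₂, hh₂⟩ := exists_epi_pb_right r u v
  haveI := hh₂
  -- Step 4: pullback u (r ≫ v) is (isomorphic to) a representable pullback
  set i : yoneda.obj (b₀ ⨯ b₀) ≅ yoneda.obj b₀ ⨯ yoneda.obj b₀ :=
    PreservesLimitPair.iso yoneda b₀ b₀ with hi
  have hifst : i.hom ≫ prod.fst = yoneda.map prod.fst := by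
    rw [hi, PreservesLimitPair.iso_hom]; exact prodComparison_fst yoneda b₀ b₀
  have hisnd : i.hom ≫ prod.snd = yoneda.map prod.snd := by
    rw [hi, PreservesLimitPair.iso_hom]; exact prodComparison_snd yoneda b₀ b₀
  set ut : c ⟶ b₀ ⨯ b₀ := prod.lift (yoneda.preimage (f' ≫ n)) (yoneda.preimage (g' ≫ n))
    with hut
  set vt : e ⟶ b₀ ⨯ b₀ := prod.lift (yoneda.preimage (r ≫ a₁ ≫ n)) (yoneda.preimage (r ≫ a₂ ≫ n))
    with hvt
  have hyu : yoneda.map ut ≫ i.hom = u := by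
    apply Limits.prod.hom_ext
    · rw [Category.assoc, hifst, ← Functor.map_comp, hut, prod.lift_fst, Functor.map_preimage,
        hu, prod.lift_fst]
    · rw [Category.assoc, hisnd, ← Functor.map_comp, hut, prod.lift_snd, Functor.map_preimage,
        hu, prod.lift_snd]
  have hyv : yoneda.map vt ≫ i.hom = r ≫ v := by
    apply Limits.prod.hom_ext
    · rw [Category.assoc, hifst, ← Functor.map_comp, hvt, prod.lift_fst, Functor.map_preimage,
        hv, Category.assoc, prod.lift_fst]
    · rw [Category.assoc, hisnd, ← Functor.map_comp, hvt, prod.lift_snd, Functor.map_preimage,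
        hv, Category.assoc, prod.lift_snd]
  -- the pullback of yoneda.map ut and yoneda.map vt is also the pullback of u and r ≫ v
  have hlim : IsPullback (pullback.fst (yoneda.map ut) (yoneda.map vt))
      (pullback.snd (yoneda.map ut) (yoneda.map vt)) (yoneda.map ut ≫ i.hom)
      (yoneda.map vt ≫ i.hom) :=
    IsPullback.of_isLimit (pullbackIsPullbackOfCompMono (yoneda.map ut) (yoneda.map vt) i.hom)
  have hlim' : IsPullback (pullback.fst (yoneda.map ut) (yoneda.map vt))
      (pullback.snd (yoneda.map ut) (yoneda.map vt)) u (r ≫ v) := by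
    rw [← hyu, ← hyv]; exact hlim
  have iso₂ : pullback (yoneda.map ut) (yoneda.map vt) ≅ pullback u (r ≫ v) :=
    hlim'.isoPullback
  have iso₃ : yoneda.obj (pullback ut vt) ≅ pullback (yoneda.map ut) (yoneda.map vt) :=
    PreservesPullback.iso yoneda ut vt
  -- Assemble the chain of epimorphisms from a representable
  refine ⟨pullback ut vt, iso₃.hom ≫ iso₂.hom ≫ h₂ ≫ β, ?_⟩
  haveI : Epi (h₂ ≫ β) := epi_comp _ _
  haveI : Epi (iso₂.hom ≫ h₂ ≫ β) := epi_comp _ _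
  exact epi_comp _ _
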